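/- Let 1 < p ≤ 2 and let (Y_j)_{1≤j≤n} be a martingale difference sequence (i.e. E[Y_j | Y_1,…,Y_{j−1}] = 0 for j = 2,…,n) with E|Y_j|^p < ∞ for every j. Then E|Σ_{j=1}^n Y_j|^p ≤ 2 Σ_{j=1}^n E|Y_j|^p. -/

import Mathlib

open MeasureTheory ProbabilityTheory Filter
open scoped ENNReal NNReal intervalIntegral

noncomputable def opow (q x : ℝ) : ℝ := Real.sign x * |x| ^ q

section Aux
open intervalIntegral


lemma opow_nonneg_eq {q x : ℝ} (hq : 0 < q) (hx : 0 ≤ x) : opow q x = x ^ q := by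
  rcases eq_or_lt_of_le hx with h | h
  · rw [opow, ← h, Real.sign_zero, abs_zero, zero_mul, Real.zero_rpow hq.ne']
  · rw [opow, Real.sign_of_pos h, abs_of_pos h, one_mul]

lemma opow_neg' (q x : ℝ) : opow q (-x) = - opow q x := by
  rcases lt_trichotomy x 0 with h | h | h
  · rw [opow, opow, Real.sign_of_pos (by linarith), Real.sign_of_neg h, abs_neg]; ring
  · simp [h, opow]
  · rw [opow, opow, Real.sign_of_neg (by linarith), Real.sign_of_pos h, abs_neg]; ring

lemma abs_opow (q x : ℝ) (hq : 0 < q) : |opow q x| = |x| ^ q := by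
  rcases lt_trichotomy x 0 with h | h | h
  · rw [opow, Real.sign_of_neg h, neg_one_mul, abs_neg,
      abs_of_nonneg (Real.rpow_nonneg (abs_nonneg x) q)]
  · simp [h, opow, Real.zero_rpow hq.ne']
  · rw [opow, Real.sign_of_pos h, one_mul,
      abs_of_nonneg (Real.rpow_nonneg (abs_nonneg x) q)]

lemma rpow_subadd {q a b : ℝ} (ha : 0 ≤ a) (hb : 0 ≤ b) (hq0 : 0 ≤ q) (hq1 : q ≤ 1) :
    (a + b) ^ q ≤ a ^ q + b ^ q := by
  have h := NNReal.rpow_add_le_add_rpow (a.toNNReal) (b.toNNReal) hq0 hq1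
  have h1 : ((a.toNNReal + b.toNNReal : ℝ≥0) : ℝ) = a + b := by
    simp [Real.coe_toNNReal _ ha, Real.coe_toNNReal _ hb]
  calc (a + b) ^ q = ((a.toNNReal + b.toNNReal : ℝ≥0) : ℝ) ^ q := by rw [h1]
    _ = (((a.toNNReal + b.toNNReal) ^ q : ℝ≥0) : ℝ) := by rw [NNReal.coe_rpow]
    _ ≤ ((a.toNNReal ^ q + b.toNNReal ^ q : ℝ≥0) : ℝ) := by exact_mod_cast h
    _ = a ^ q + b ^ q := by
        push_cast [NNReal.coe_rpow, Real.coe_toNNReal _ ha, Real.coe_toNNReal _ hb]; ring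


lemma opow_sub_le {q : ℝ} (hq0 : 0 < q) (hq1 : q ≤ 1) (a b : ℝ) (hab : b ≤ a) :
    opow q a - opow q b ≤ 2 * (a - b) ^ q := by
  have habn : 0 ≤ a - b := by linarith
  rcases le_or_gt 0 b with hb | hb
  · -- 0 ≤ b ≤ a
    rw [opow_nonneg_eq hq0 hb, opow_nonneg_eq hq0 (hb.trans hab)]
    have : a ^ q ≤ (a - b) ^ q + b ^ q := by
      have := rpow_subadd habn hb hq0.le hq1
      rwa [sub_add_cancel] at this
    nlinarith [Real.rpow_nonneg habn q]
  · rcases le_or_gt a 0 with ha | ha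
    · -- b ≤ a ≤ 0
      have h1 : opow q a = - (-a) ^ q := by
        rw [← opow_nonneg_eq hq0 (by linarith : (0:ℝ) ≤ -a), opow_neg', neg_neg]
      have h2 : opow q b = - (-b) ^ q := by
        rw [← opow_nonneg_eq hq0 (by linarith : (0:ℝ) ≤ -b), opow_neg', neg_neg]
      rw [h1, h2]
      have key : (-b) ^ q ≤ (a - b) ^ q + (-a) ^ q := by
        have := rpow_subadd habn (by linarith : (0:ℝ) ≤ -a) hq0.le hq1
        rw [show a - b + -a = -b by ring] at this
        exact this
      nlinarith [Real.rpow_nonneg habn q]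
    · -- b < 0 < a
      rw [opow_nonneg_eq hq0 ha.le]
      have h2 : opow q b = - (-b) ^ q := by
        rw [← opow_nonneg_eq hq0 (by linarith : (0:ℝ) ≤ -b), opow_neg', neg_neg]
      rw [h2, sub_neg_eq_add]
      have k1 : a ^ q ≤ (a - b) ^ q := Real.rpow_le_rpow ha.le (by linarith) hq0.le
      have k2 : (-b) ^ q ≤ (a - b) ^ q := Real.rpow_le_rpow (by linarith) (by linarith) hq0.le
      linarith

lemma opow_mono {q : ℝ} (hq0 : 0 < q) {a b : ℝ} (hab : b ≤ a) : opow q b ≤ opow q a := by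
  rcases le_or_gt 0 b with hb | hb
  · rw [opow_nonneg_eq hq0 hb, opow_nonneg_eq hq0 (hb.trans hab)]
    exact Real.rpow_le_rpow hb hab hq0.le
  · rcases le_or_gt 0 a with ha | ha
    · have h2 : opow q b = - (-b) ^ q := by
        rw [← opow_nonneg_eq hq0 (by linarith : (0:ℝ) ≤ -b), opow_neg', neg_neg]
      rw [h2, opow_nonneg_eq hq0 ha]
      have := Real.rpow_nonneg (by linarith : (0:ℝ) ≤ -b) q
      have := Real.rpow_nonneg ha q
      linarith
    · have h2 : opow q b = - (-b) ^ q := by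
        rw [← opow_nonneg_eq hq0 (by linarith : (0:ℝ) ≤ -b), opow_neg', neg_neg]
      have h1 : opow q a = - (-a) ^ q := by
        rw [← opow_nonneg_eq hq0 (by linarith : (0:ℝ) ≤ -a), opow_neg', neg_neg]
      rw [h1, h2, neg_le_neg_iff]
      exact Real.rpow_le_rpow (by linarith) (by linarith) hq0.le

lemma abs_opow_sub_le {q : ℝ} (hq0 : 0 < q) (hq1 : q ≤ 1) (a b : ℝ) :
    |opow q a - opow q b| ≤ 2 * |a - b| ^ q := by
  rcases le_total b a with h | h
  · rw [abs_of_nonneg (by linarith : (0:ℝ) ≤ a - b)]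
    refine abs_sub_le_iff.2 ⟨opow_sub_le hq0 hq1 a b h, ?_⟩
    have := opow_mono hq0 h
    have := Real.rpow_nonneg (by linarith : (0:ℝ) ≤ a - b) q
    linarith
  · rw [abs_sub_comm a b, abs_of_nonneg (by linarith : (0:ℝ) ≤ b - a)]
    refine abs_sub_le_iff.2 ⟨?_, opow_sub_le hq0 hq1 b a h⟩
    have := opow_mono hq0 h
    have := Real.rpow_nonneg (by linarith : (0:ℝ) ≤ b - a) q
    linarith

lemma opow_eq_rpow_mul {p : ℝ} (hp : 1 < p) (x : ℝ) :
    opow (p - 1) x = |x| ^ (p - 2) * x := by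
  rcases eq_or_ne x 0 with rfl | hx
  · simp [opow]
  · have hax : (0:ℝ) < |x| := abs_pos.2 hx
    have h1 : |x| ^ (p - 1) = |x| ^ (p - 2) * |x| := by
      rw [← Real.rpow_add_one hax.ne' (p-2), show p - 2 + 1 = p - 1 by ring]
    rcases lt_or_gt_of_ne hx with h | h
    · rw [opow, Real.sign_of_neg h, h1, abs_of_neg h]; ring
    · rw [opow, Real.sign_of_pos h, h1, abs_of_pos h]; ring

lemma hasDerivAt_abs_rpow' {p : ℝ} (hp : 1 < p) (x : ℝ) :
    HasDerivAt (fun t : ℝ => |t| ^ p) (p * opow (p - 1) x) x := by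
  have := hasDerivAt_abs_rpow x hp
  rwa [show p * |x| ^ (p-2) * x = p * opow (p-1) x by rw [opow_eq_rpow_mul hp]; ring] at this

lemma continuous_opow {q : ℝ} (hq : 0 < q) : Continuous (opow q) := by
  rw [continuous_iff_continuousAt]
  intro x
  rcases lt_trichotomy x 0 with hx | hx | hx
  · have h : (fun t : ℝ => -((-t) ^ q)) =ᶠ[nhds x] opow q := by
      filter_upwards [eventually_lt_nhds hx] with t ht
      rw [show t = -(-t) by ring, opow_neg', opow_nonneg_eq hq (by linarith : (0:ℝ) ≤ -t)]
      ring_nf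
    refine ContinuousAt.congr ?_ h
    exact (((Real.continuousAt_rpow_const (-x) q (Or.inl (by linarith))).comp
      (continuous_neg.continuousAt))).neg
  · subst hx
    rw [ContinuousAt, show opow q 0 = 0 by simp [opow]]
    have key : Tendsto (fun t : ℝ => |t| ^ q) (nhds 0) (nhds 0) := by
      have habs : Tendsto (fun t : ℝ => |t|) (nhds 0) (nhds 0) :=
        continuous_abs.tendsto' 0 0 abs_zero
      have h := (Real.continuousAt_rpow_const 0 q (Or.inr (by linarith))).tendsto
      rw [Real.zero_rpow hq.ne'] at h
      exact h.comp habs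
    apply squeeze_zero_norm ?_ key
    intro t
    rw [Real.norm_eq_abs, abs_opow q t hq]
  · have h : (fun t : ℝ => t ^ q) =ᶠ[nhds x] opow q := by
      filter_upwards [eventually_gt_nhds hx] with t ht
      rw [opow_nonneg_eq hq ht.le]
    exact ContinuousAt.congr (Real.continuousAt_rpow_const x q (Or.inl hx.ne')) h

/-- key pointwise inequality -/
lemma abs_rpow_add_le {p : ℝ} (hp1 : 1 < p) (hp2 : p ≤ 2) (x y : ℝ) :
    |x + y| ^ p ≤ |x| ^ p + p * opow (p - 1) x * y + 2 * |y| ^ p := by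
  rcases eq_or_ne y 0 with rfl | hy
  · simp [Real.zero_rpow (by positivity : p ≠ 0)]
  have hq0 : 0 < p - 1 := by linarith
  have hq1 : p - 1 ≤ 1 := by linarith
  set q := p - 1 with hq
  -- derivative of g t = |x + t*y| ^ p
  have hg : ∀ t : ℝ, HasDerivAt (fun t : ℝ => |x + t * y| ^ p)
      (p * opow q (x + t * y) * y) t := by
    intro t
    have h1 : HasDerivAt (fun t : ℝ => x + t * y) y t := by
      simpa using ((hasDerivAt_id t).mul_const y).const_add x
    exact (hasDerivAt_abs_rpow' hp1 (x + t * y)).comp t h1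
  have hcont : Continuous (fun t : ℝ => p * opow q (x + t * y) * y) := by
    exact (continuous_const.mul ((continuous_opow hq0).comp
      (continuous_const.add (continuous_id.mul continuous_const)))).mul continuous_const
  have hftc : ∫ t in (0:ℝ)..1, p * opow q (x + t * y) * y
      = |x + y| ^ p - |x| ^ p := by
    have := integral_eq_sub_of_hasDerivAt (f := fun t : ℝ => |x + t * y| ^ p)
      (fun t _ => hg t) (hcont.intervalIntegrable 0 1)
    simpa using this
  -- bound the difference integrand
  have hbound : ∀ t ∈ Set.Icc (0:ℝ) 1,
      p * opow q (x + t * y) * y - p * opow q x * y ≤ 2 * p * |y| ^ p * t ^ q := by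
    intro t ht
    have h1 : p * opow q (x + t * y) * y - p * opow q x * y
        = p * (opow q (x + t * y) - opow q x) * y := by ring
    rw [h1]
    have h2 : |p * (opow q (x + t * y) - opow q x) * y| ≤ p * (2 * |t * y| ^ q) * |y| := by
      rw [abs_mul, abs_mul, abs_of_pos (by linarith : (0:ℝ) < p)]
      have := abs_opow_sub_le hq0 hq1 (x + t * y) x
      rw [show x + t * y - x = t * y by ring] at this
      gcongr
    have h3 : p * (2 * |t * y| ^ q) * |y| = 2 * p * |y| ^ p * t ^ q := by
      rw [abs_mul, Real.mul_rpow (abs_nonneg t) (abs_nonneg y),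
        abs_of_nonneg ht.1]
      have : |y| ^ q * |y| = |y| ^ p := by
        rw [← Real.rpow_add_one (abs_ne_zero.2 hy) q, hq, sub_add_cancel]
      rw [← this]; ring
    calc p * (opow q (x + t * y) - opow q x) * y
        ≤ |p * (opow q (x + t * y) - opow q x) * y| := le_abs_self _
      _ ≤ p * (2 * |t * y| ^ q) * |y| := h2
      _ = 2 * p * |y| ^ p * t ^ q := h3
  -- integrate the bound
  have hInt1 : IntervalIntegrable (fun t : ℝ => p * opow q (x + t * y) * y - p * opow q x * y)
      MeasureTheory.volume 0 1 := (hcont.sub continuous_const).intervalIntegrable 0 1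
  have hcont2 : Continuous (fun t : ℝ => 2 * p * |y| ^ p * t ^ q) := by
    apply Continuous.mul continuous_const
    rw [continuous_iff_continuousAt]
    intro t
    exact Real.continuousAt_rpow_const t q (Or.inr hq0.le)
  have hmono := integral_mono_on (a := (0:ℝ)) (b := 1) zero_le_one hInt1
      (hcont2.intervalIntegrable 0 1) hbound
  have hconst : ∫ t in (0:ℝ)..1, p * opow q x * y = p * opow q x * y := by simp
  have hsub : ∫ t in (0:ℝ)..1, (p * opow q (x + t * y) * y - p * opow q x * y)
      = (|x + y| ^ p - |x| ^ p) - p * opow q x * y := by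
    rw [intervalIntegral.integral_sub (hcont.intervalIntegrable 0 1)
      (intervalIntegrable_const), hftc, hconst]
  have hrhs : ∫ t in (0:ℝ)..1, 2 * p * |y| ^ p * t ^ q = 2 * |y| ^ p := by
    rw [intervalIntegral.integral_const_mul]
    rw [integral_rpow (Or.inl (by linarith : (-1:ℝ) < q))]
    rw [Real.one_rpow, Real.zero_rpow (by positivity : q + 1 ≠ 0)]
    field_simp [hq]
    ring
  rw [hsub, hrhs] at hmono
  linarith

variable {Ω : Type*} {m m0 : MeasurableSpace Ω} {μ : Measure Ω}

lemma memℒp_opow {p : ℝ} (hp1 : 1 < p) (hp2 : p ≤ 2) {S : Ω → ℝ}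
    [IsProbabilityMeasure μ]
    (hS : MemLp S (ENNReal.ofReal p) μ) :
    MemLp (fun ω => opow (p - 1) (S ω)) (ENNReal.ofReal (p / (p - 1))) μ := by
  have hq0 : (0:ℝ) < p - 1 := by linarith
  constructor
  · exact (continuous_opow hq0).comp_aestronglyMeasurable hS.1
  · have h1 : eLpNorm (fun ω => opow (p - 1) (S ω)) (ENNReal.ofReal (p / (p - 1))) μ
        = eLpNorm (fun ω => ‖S ω‖ ^ (p - 1)) (ENNReal.ofReal (p / (p - 1))) μ := by
      apply eLpNorm_congr_norm_ae
      filter_upwards with ω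
      simp only [Real.norm_eq_abs]
      rw [abs_opow _ _ hq0, abs_of_nonneg (Real.rpow_nonneg (abs_nonneg _) _)]
    rw [h1, eLpNorm_norm_rpow S hq0]
    have h2 : ENNReal.ofReal (p / (p - 1)) * ENNReal.ofReal (p - 1) = ENNReal.ofReal p := by
      rw [← ENNReal.ofReal_mul (by positivity)]
      rw [div_mul_cancel₀ _ (by linarith : p - 1 ≠ 0)]
    rw [h2]
    exact ENNReal.rpow_lt_top_of_nonneg hq0.le hS.2.ne

lemma step_lemma {p : ℝ} (hp1 : 1 < p) (hp2 : p ≤ 2)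
    (hm : m ≤ m0) [IsProbabilityMeasure μ]
    {S Y : Ω → ℝ}
    (hS : MemLp S (ENNReal.ofReal p) μ)
    (hSmeas : StronglyMeasurable[m] S)
    (hY : MemLp Y (ENNReal.ofReal p) μ)
    (hcond : μ[Y | m] =ᵐ[μ] 0) :
    ∫ ω, |S ω + Y ω| ^ p ∂μ ≤
      ∫ ω, |S ω| ^ p ∂μ + 2 * ∫ ω, |Y ω| ^ p ∂μ := by
  have hq0 : (0:ℝ) < p - 1 := by linarith
  have hp0 : (0:ℝ) < p := by linarith
  have htoReal : (ENNReal.ofReal p).toReal = p := ENNReal.toReal_ofReal hp0.le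
  set f : Ω → ℝ := fun ω => opow (p - 1) (S ω) with hf
  have hfm : MemLp f (ENNReal.ofReal (p / (p - 1))) μ := memℒp_opow hp1 hp2 hS
  -- integrability of f * Y
  have hconj : (1 : ℝ≥0∞) / 1 = 1 / ENNReal.ofReal (p / (p - 1)) + 1 / ENNReal.ofReal p := by
    rw [one_div_one, one_div, one_div, ← ENNReal.ofReal_inv_of_pos (by positivity),
      ← ENNReal.ofReal_inv_of_pos hp0, ← ENNReal.ofReal_add (by positivity) (by positivity)]
    rw [show (p / (p-1))⁻¹ + p⁻¹ = 1 by field_simp; ring]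
    exact ENNReal.ofReal_one.symm
  have hfY : Integrable (fun ω => f ω * Y ω) μ := by
    haveI : ENNReal.HolderTriple (ENNReal.ofReal (p / (p - 1))) (ENNReal.ofReal p) 1 :=
      ⟨by simpa [one_div] using hconj.symm⟩
    have := MemLp.smul (f := Y) (φ := f) (r := 1) hY hfm
    rw [memLp_one_iff_integrable] at this
    exact this
  -- integrability of the rpow terms
  have hSint : Integrable (fun ω => |S ω| ^ p) μ := by
    have := hS.integrable_norm_rpow (by simp [hp0] : ENNReal.ofReal p ≠ 0) (by simp)
    simpa [htoReal] using this
  have hYint : Integrable (fun ω => |Y ω| ^ p) μ := by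
    have := hY.integrable_norm_rpow (by simp [hp0] : ENNReal.ofReal p ≠ 0) (by simp)
    simpa [htoReal] using this
  have hSYint : Integrable (fun ω => |S ω + Y ω| ^ p) μ := by
    have := (hS.add hY).integrable_norm_rpow (by simp [hp0] : ENNReal.ofReal p ≠ 0) (by simp)
    simpa [htoReal] using this
  have hYint1 : Integrable Y μ :=
    hY.integrable (by simpa using ENNReal.one_le_ofReal.2 hp1.le)
  -- cross term is zero
  haveI : SigmaFinite (μ.trim hm) := by infer_instance
  have hfmeas : StronglyMeasurable[m] f :=
    (continuous_opow hq0).comp_stronglyMeasurable hSmeas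
  have hcross : ∫ ω, f ω * Y ω ∂μ = 0 := by
    have hpull := condExp_mul_of_stronglyMeasurable_left (μ := μ) hfmeas
      (by exact hfY) hYint1
    have h0 : μ[f * Y | m] =ᵐ[μ] 0 := by
      refine hpull.trans ?_
      filter_upwards [hcond] with ω hω
      simp [Pi.mul_apply, hω]
    calc ∫ ω, f ω * Y ω ∂μ
        = ∫ ω, (f * Y) ω ∂μ := rfl
      _ = ∫ ω, (μ[f * Y | m]) ω ∂μ :=
          (integral_condExp hm).symm
      _ = ∫ ω, (0:ℝ) ∂μ := integral_congr_ae h0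
      _ = 0 := by simp
  -- combine
  have hptwise : ∀ ω, |S ω + Y ω| ^ p
      ≤ |S ω| ^ p + p * (f ω * Y ω) + 2 * |Y ω| ^ p := by
    intro ω
    have := abs_rpow_add_le hp1 hp2 (S ω) (Y ω)
    rw [hf]; dsimp only; linarith
  have hRHSint : Integrable
      (fun ω => |S ω| ^ p + p * (f ω * Y ω) + 2 * |Y ω| ^ p) μ :=
    (hSint.add ((hfY.const_mul p))).add (hYint.const_mul 2)
  calc ∫ ω, |S ω + Y ω| ^ p ∂μ
      ≤ ∫ ω, (|S ω| ^ p + p * (f ω * Y ω) + 2 * |Y ω| ^ p) ∂μ :=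
        integral_mono hSYint hRHSint hptwise
    _ = ∫ ω, |S ω| ^ p ∂μ + p * ∫ ω, f ω * Y ω ∂μ
        + 2 * ∫ ω, |Y ω| ^ p ∂μ := by
        have e1 : ∫ ω, (|S ω| ^ p + p * (f ω * Y ω) + 2 * |Y ω| ^ p) ∂μ
            = ∫ ω, (|S ω| ^ p + p * (f ω * Y ω)) ∂μ + ∫ ω, 2 * |Y ω| ^ p ∂μ :=
          integral_add (hSint.add (hfY.const_mul p)) (hYint.const_mul 2)
        have e2 : ∫ ω, (|S ω| ^ p + p * (f ω * Y ω)) ∂μ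
            = ∫ ω, |S ω| ^ p ∂μ + ∫ ω, p * (f ω * Y ω) ∂μ :=
          integral_add hSint (hfY.const_mul p)
        rw [e1, e2, MeasureTheory.integral_const_mul, MeasureTheory.integral_const_mul]
    _ = ∫ ω, |S ω| ^ p ∂μ + 2 * ∫ ω, |Y ω| ^ p ∂μ := by
        rw [hcross]; ring

end Aux

/-- **von Bahr–Esséen inequality for martingale differences** (Proposition 1 and Remark 1 of
the paper, case `1 < p ≤ 2`, with explicit constant `K_p = 2`):
if `(Y_j)_{1 ≤ j ≤ n}` are real random variables with `E|Y_j|^p < ∞` and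
`E[Y_j | Y_1, …, Y_{j-1}] = 0` for `j = 2, …, n`, then
`E|∑_{j=1}^n Y_j|^p ≤ 2 ∑_{j=1}^n E|Y_j|^p`. -/
theorem vonBahr_Esseen_martingale_difference
    {Ω : Type*} [MeasureSpace Ω] [IsProbabilityMeasure (ℙ : Measure Ω)]
    (p : ℝ) (hp1 : 1 < p) (hp2 : p ≤ 2)
    (n : ℕ) (Y : Fin n → Ω → ℝ)
    (hmeas : ∀ j, Measurable (Y j))
    (hLp : ∀ j, MemLp (Y j) (ENNReal.ofReal p) (ℙ : Measure Ω))
    (hmd : ∀ j : Fin n, 0 < (j : ℕ) →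
      (ℙ : Measure Ω)[Y j |
          ⨆ (i : Fin n) (_ : i < j), MeasurableSpace.comap (Y i) inferInstance]
        =ᵐ[(ℙ : Measure Ω)] 0) :
    ∫ ω, |∑ j, Y j ω| ^ p ∂(ℙ : Measure Ω) ≤
      2 * ∑ j, ∫ ω, |Y j ω| ^ p ∂(ℙ : Measure Ω) := by
  have hp0 : (0:ℝ) < p := by linarith
  set A : ℕ → Finset (Fin n) := fun k => Finset.univ.filter (fun j : Fin n => (j : ℕ) < k)
    with hA
  have key : ∀ k, k ≤ n →
      ∫ ω, |∑ j ∈ A k, Y j ω| ^ p ∂(ℙ : Measure Ω) ≤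
        2 * ∑ j ∈ A k, ∫ ω, |Y j ω| ^ p ∂(ℙ : Measure Ω) := by
    intro k
    induction k with
    | zero =>
      intro _
      simp [hA, Real.zero_rpow hp0.ne']
    | succ k ih =>
      intro hk1
      have hk : k < n := hk1
      have ihk := ih hk.le
      set jk : Fin n := ⟨k, hk⟩ with hjk
      have hAk : A (k + 1) = insert jk (A k) := by
        ext j
        simp only [hA, Finset.mem_filter, Finset.mem_univ, true_and, Finset.mem_insert]
        rw [Nat.lt_succ_iff_lt_or_eq]
        constructor
        · rintro (h | h)
          · exact Or.inr h
          · exact Or.inl (Fin.ext h)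
        · rintro (h | h)
          · exact Or.inr (by rw [h])
          · exact Or.inl h
      have hjknotin : jk ∉ A k := by simp [hA, hjk]
      have hsum : ∀ ω, ∑ j ∈ A (k+1), Y j ω = (∑ j ∈ A k, Y j ω) + Y jk ω := by
        intro ω
        rw [hAk, Finset.sum_insert hjknotin]; ring
      have hsum2 : ∑ j ∈ A (k+1), ∫ ω, |Y j ω| ^ p ∂(ℙ : Measure Ω)
          = ∫ ω, |Y jk ω| ^ p ∂(ℙ : Measure Ω)
            + ∑ j ∈ A k, ∫ ω, |Y j ω| ^ p ∂(ℙ : Measure Ω) := by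
        rw [hAk, Finset.sum_insert hjknotin]
      simp_rw [hsum, hsum2]
      rcases Nat.eq_zero_or_pos k with rfl | hkpos
      · -- first summand: A 0 = ∅
        have h0 : ∀ ω, (∑ j ∈ A 0, Y j ω) = 0 := by intro ω; simp [hA]
        simp_rw [h0, zero_add]
        have hnn : 0 ≤ ∫ ω, |Y jk ω| ^ p ∂(ℙ : Measure Ω) :=
          integral_nonneg fun ω => Real.rpow_nonneg (abs_nonneg _) p
        have h00 : (∑ j ∈ A 0, ∫ ω, |Y j ω| ^ p ∂(ℙ : Measure Ω)) = 0 := by simp [hA]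
        rw [h00]
        linarith
      · -- use the step lemma
        have hS : MemLp (fun ω => ∑ j ∈ A k, Y j ω) (ENNReal.ofReal p) (ℙ : Measure Ω) := by
          have := memLp_finset_sum' (μ := (ℙ : Measure Ω)) (A k) fun j _ => hLp j
          have heq : (∑ i ∈ A k, Y i) = fun ω => ∑ j ∈ A k, Y j ω := by
            ext ω; simp [Finset.sum_apply]
          rwa [heq] at this
        have hm : (⨆ (i : Fin n) (_ : i < jk), MeasurableSpace.comap (Y i) inferInstance)
            ≤ (inferInstance : MeasurableSpace Ω) := by
          refine iSup₂_le fun i _ => ?_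
          exact measurable_iff_comap_le.1 (hmeas i)
        have hSmeas : StronglyMeasurable[⨆ (i : Fin n) (_ : i < jk),
            MeasurableSpace.comap (Y i) inferInstance] (fun ω => ∑ j ∈ A k, Y j ω) := by
          refine Finset.stronglyMeasurable_fun_sum _ fun j hj => ?_
          have hjlt : j < jk := by
            simp only [hA, Finset.mem_filter] at hj
            exact hj.2
          have h1 : Measurable[MeasurableSpace.comap (Y j) inferInstance] (Y j) :=
            Measurable.of_comap_le le_rfl
          exact (h1.mono (le_iSup₂ (f := fun (i : Fin n) (_ : i < jk) =>
            MeasurableSpace.comap (Y i) inferInstance) j hjlt) le_rfl).stronglyMeasurable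
        have hcond := hmd jk hkpos
        have := step_lemma hp1 hp2 hm hS hSmeas (hLp jk) hcond
        calc ∫ ω, |(∑ j ∈ A k, Y j ω) + Y jk ω| ^ p ∂(ℙ : Measure Ω)
            ≤ ∫ ω, |∑ j ∈ A k, Y j ω| ^ p ∂(ℙ : Measure Ω)
              + 2 * ∫ ω, |Y jk ω| ^ p ∂(ℙ : Measure Ω) := this
          _ ≤ 2 * ∑ j ∈ A k, ∫ ω, |Y j ω| ^ p ∂(ℙ : Measure Ω)
              + 2 * ∫ ω, |Y jk ω| ^ p ∂(ℙ : Measure Ω) := by linarith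
          _ = 2 * (∫ ω, |Y jk ω| ^ p ∂(ℙ : Measure Ω)
              + ∑ j ∈ A k, ∫ ω, |Y j ω| ^ p ∂(ℙ : Measure Ω)) := by ring
  have hAn : A n = Finset.univ := by
    apply Finset.filter_true_of_mem
    intro j _
    exact j.isLt
  have := key n le_rfl
  rw [hAn] at this
  exact this
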